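/- The function P on quadruples of nonnegative integers defined by P(i,j;k,l) = #{(m,n) : l+2 ≤ m+n ≤ k+l+1, 1 ≤ m ≤ i, 1 ≤ n ≤ j} − #{(m,n) : 1 ≤ m+n ≤ i, 1 ≤ m ≤ k, 1 ≤ n ≤ l} for j ≤ l, extended by P(k,l;i,j) = −P(i,j;k,l), is well-defined and antisymmetric: in the overlap case j = l, the formula satisfies P(i,j;k,j) = −P(k,j;i,j), i.e. #{(m,n) : j+2 ≤ m+n ≤ k+j+1, 1 ≤ m ≤ i, 1 ≤ n ≤ j} − #{(m,n) : 1 ≤ m+n ≤ i, 1 ≤ m ≤ k, 1 ≤ n ≤ j} = −(#{(m,n) : j+2 ≤ m+n ≤ i+j+1, 1 ≤ m ≤ k, 1 ≤ n ≤ j} − #{(m,n) : 1 ≤ m+n ≤ k, 1 ≤ m ≤ i, 1 ≤ n ≤ j}). -/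
import Mathlib

lemma stmt9_key (i j k : ℕ) :
    ((Finset.Icc 1 i ×ˢ Finset.Icc 1 j).filter
        (fun p => j + 2 ≤ p.1 + p.2 ∧ p.1 + p.2 ≤ k + j + 1)).card =
    ((Finset.Icc 1 k ×ˢ Finset.Icc 1 j).filter
        (fun p => 1 ≤ p.1 + p.2 ∧ p.1 + p.2 ≤ i)).card := by
  apply Finset.card_bij' (fun p _ => (p.1 + p.2 - (j + 1), j + 1 - p.2))
    (fun p _ => (p.1 + p.2, j + 1 - p.2)) <;>
  · intro p hp
    simp only [Finset.mem_filter, Finset.mem_product, Finset.mem_Icc, Prod.ext_iff] at *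
    omega

/-- Antisymmetry of the exponent function `P` in the overlap case `j = l`:
`P(i,j;k,j) = −P(k,j;i,j)`, written out in terms of the defining
cardinalities. -/
theorem stmt9 (i j k : ℕ) :
    (((Finset.Icc 1 i ×ˢ Finset.Icc 1 j).filter
        (fun p => j + 2 ≤ p.1 + p.2 ∧ p.1 + p.2 ≤ k + j + 1)).card : ℤ) -
      (((Finset.Icc 1 k ×ˢ Finset.Icc 1 j).filter
        (fun p => 1 ≤ p.1 + p.2 ∧ p.1 + p.2 ≤ i)).card : ℤ) =
    -((((Finset.Icc 1 k ×ˢ Finset.Icc 1 j).filter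
        (fun p => j + 2 ≤ p.1 + p.2 ∧ p.1 + p.2 ≤ i + j + 1)).card : ℤ) -
      (((Finset.Icc 1 i ×ˢ Finset.Icc 1 j).filter
        (fun p => 1 ≤ p.1 + p.2 ∧ p.1 + p.2 ≤ k)).card : ℤ)) := by
  rw [stmt9_key i j k, stmt9_key k j i]
  ring
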